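/- (Witness contribution lower bound) Let P be a finite point set, O and X sets of centers, r ≥ 0, ε ∈ (0,1), r' = (1+ε/3)r, and G ≥ Σ_{p∈P} d_r(p, O). Let W = {p ∈ P : d_{r'}(p, X) > (1+ε/3)·d_r(p, O)} be the set of ε/3-witnesses. If Σ_{p∈P} d_{r'}(p, X) > (1+ε)(1+ε/3)·Σ_{p∈P} d_r(p, O), then Σ_{p∈W} d_{r'}(p, X) ≥ (ε/10)·Σ_{p∈P} d_{r'}(p, X). -/
import Mathlib


theorem stmt_6 {M : Type*} [MetricSpace M] (P : Finset M) (X O : Finset M)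
    (hX : X.Nonempty) (hO : O.Nonempty) (r ε : ℝ) (hr : 0 ≤ r) (hε : ε ∈ Set.Ioo (0:ℝ) 1)
    (hbig : ∑ p ∈ P, max (X.inf' hX (fun x => dist p x) - (1 + ε/3) * r) 0
        > (1 + ε) * (1 + ε/3) * ∑ p ∈ P, max (O.inf' hO (fun o => dist p o) - r) 0) :
    ∑ p ∈ P.filter (fun p =>
        max (X.inf' hX (fun x => dist p x) - (1 + ε/3) * r) 0
          > (1 + ε/3) * max (O.inf' hO (fun o => dist p o) - r) 0),
      max (X.inf' hX (fun x => dist p x) - (1 + ε/3) * r) 0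
      ≥ (ε / 10) * ∑ p ∈ P, max (X.inf' hX (fun x => dist p x) - (1 + ε/3) * r) 0 := by
  obtain ⟨hε0, hε1⟩ := hε
  set f : M → ℝ := fun p => max (X.inf' hX (fun x => dist p x) - (1 + ε/3) * r) 0 with hf
  set g : M → ℝ := fun p => max (O.inf' hO (fun o => dist p o) - r) 0 with hg
  have hfpos : ∀ p, 0 ≤ f p := fun p => le_max_right _ _
  have hgpos : ∀ p, 0 ≤ g p := fun p => le_max_right _ _
  have hsplit := Finset.sum_filter_add_sum_filter_not P (fun p => f p > (1 + ε/3) * g p) f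
  have hnw : ∑ p ∈ P.filter (fun p => ¬ f p > (1 + ε/3) * g p), f p
      ≤ (1 + ε/3) * ∑ p ∈ P, g p := by
    calc ∑ p ∈ P.filter (fun p => ¬ f p > (1 + ε/3) * g p), f p
        ≤ ∑ p ∈ P.filter (fun p => ¬ f p > (1 + ε/3) * g p), (1 + ε/3) * g p := by
          apply Finset.sum_le_sum
          intro p hp
          exact not_lt.mp (Finset.mem_filter.mp hp).2
      _ ≤ ∑ p ∈ P, (1 + ε/3) * g p := by
          apply Finset.sum_le_sum_of_subset_of_nonneg (Finset.filter_subset _ _)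
          intro p _ _
          positivity
      _ = (1 + ε/3) * ∑ p ∈ P, g p := by rw [Finset.mul_sum]
  have hG : 0 ≤ ∑ p ∈ P, g p := Finset.sum_nonneg fun p _ => hgpos p
  have hF : 0 ≤ ∑ p ∈ P, f p := Finset.sum_nonneg fun p _ => hfpos p
  have hWpos : 0 ≤ ∑ p ∈ P.filter (fun p => f p > (1 + ε/3) * g p), f p :=
    Finset.sum_nonneg fun p _ => hfpos p
  show ∑ p ∈ P.filter (fun p => f p > (1 + ε/3) * g p), f p ≥ ε / 10 * ∑ p ∈ P, f p
  nlinarith [hsplit, hnw, hbig, mul_nonneg hε0.le hF, mul_nonneg hε0.le hG, hWpos]
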